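/- The second moment of the normalized autocorrelation of Eulerian numbers equals (n+1)/6: that is, ∑_i i^2 * (∑_p A(n,p)*A(n,p-i)) / (∑_p A(n,p))^2 = (n+1)/6. -/

import Mathlib

open Finset Equiv


/-- The Eulerian number `A(n,q)`: the number of permutations of `{1,...,n}`
with exactly `q` ascents.  (In particular `A(n,q) = 0` unless `0 ≤ q < n`.) -/
def eulerian (n q : ℕ) : ℕ :=
  (Finset.univ.filter fun σ : Equiv.Perm (Fin n) =>
    (Finset.univ.filter fun i : Fin n =>
      ∃ j : Fin n, (j : ℕ) = (i : ℕ) + 1 ∧ σ i < σ j).card = q).card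

/-- The Eulerian number extended to integer arguments, vanishing for negative
arguments (so `A(n,q) = 0` unless `0 ≤ q < n`). -/
def eulerianZ (n : ℕ) (q : ℤ) : ℕ := if 0 ≤ q then eulerian n q.toNat else 0

namespace EulerAux

/-- number of ascents -/
def asc (n : ℕ) (σ : Perm (Fin n)) : ℕ :=
  (Finset.univ.filter fun i : Fin n =>
      ∃ j : Fin n, (j : ℕ) = (i : ℕ) + 1 ∧ σ i < σ j).card

lemma eulerian_eq (n q : ℕ) :
    eulerian n q = (Finset.univ.filter fun σ : Perm (Fin n) => asc n σ = q).card := rfl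

lemma asc_lt {n : ℕ} (hn : 1 ≤ n) (σ : Perm (Fin n)) : asc n σ < n := by
  have hsub : (Finset.univ.filter fun i : Fin n =>
      ∃ j : Fin n, (j : ℕ) = (i : ℕ) + 1 ∧ σ i < σ j) ⊆
      Finset.univ.erase ⟨n-1, by omega⟩ := by
    intro i hi
    simp only [mem_filter, mem_univ, true_and] at hi
    obtain ⟨j, hj, -⟩ := hi
    have hjlt := j.isLt
    simp only [mem_erase, mem_univ, and_true]
    intro he
    have : (i : ℕ) = n - 1 := by rw [he]
    omega
  have h := Finset.card_le_card hsub
  rw [Finset.card_erase_of_mem (mem_univ _), Finset.card_univ, Fintype.card_fin] at h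
  unfold asc
  omega

lemma eulerian_eq_zero {n q : ℕ} (hn : 1 ≤ n) (h : n ≤ q) : eulerian n q = 0 := by
  rw [eulerian_eq, Finset.card_eq_zero, Finset.filter_eq_empty_iff]
  intro σ _
  have := asc_lt hn σ
  omega

lemma eulerianZ_natCast (n q : ℕ) : eulerianZ n (q : ℤ) = eulerian n q := by
  simp [eulerianZ]

lemma eulerianZ_eq_zero {n : ℕ} (hn : 1 ≤ n) {q : ℤ} (h : q < 0 ∨ (n:ℤ) ≤ q) :
    eulerianZ n q = 0 := by
  rcases h with h | h
  · simp [eulerianZ, not_le.mpr h]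
  · rcases le_or_gt 0 q with h0 | h0
    · simp only [eulerianZ, if_pos h0]
      exact eulerian_eq_zero hn (by omega)
    · simp [eulerianZ, not_le.mpr h0]

/-- prune a sum of `eulerianZ` over a big enough `ℤ`-index set to `range n`. -/
lemma sum_eZ_prune {n : ℕ} (hn : 1 ≤ n) (s : Finset ℤ)
    (hs : ∀ q : ℕ, q < n → (q : ℤ) ∈ s) (g : ℤ → ℚ) :
    ∑ q ∈ s, (eulerianZ n q : ℚ) * g q
      = ∑ q ∈ range n, (eulerian n q : ℚ) * g (q : ℤ) := by
  have hsub : (range n).image (Nat.cast : ℕ → ℤ) ⊆ s := by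
    intro x hx
    simp only [mem_image, mem_range] at hx
    obtain ⟨q, hq, rfl⟩ := hx
    exact hs q hq
  rw [← Finset.sum_subset hsub]
  · rw [Finset.sum_image (by intro a _ b _ h; exact_mod_cast h)]
    exact Finset.sum_congr rfl fun q _ => by rw [eulerianZ_natCast]
  · intro q hq hq2
    have : eulerianZ n q = 0 := by
      apply eulerianZ_eq_zero hn
      by_contra hcon
      push_neg at hcon
      apply hq2
      simp only [mem_image, mem_range]
      exact ⟨q.toNat, by omega, by omega⟩
    simp [this]

/-- sum over Eulerian numbers as a sum over permutations -/
lemma sum_eulerian_mul {n : ℕ} (hn : 1 ≤ n) (f : ℕ → ℚ) :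
    ∑ p ∈ range n, (eulerian n p : ℚ) * f p
      = ∑ σ : Perm (Fin n), f (asc n σ) := by
  rw [← Finset.sum_fiberwise_of_maps_to
      (g := asc n) (t := range n) (fun σ _ => mem_range.mpr (asc_lt hn σ))
      (fun σ => f (asc n σ))]
  refine Finset.sum_congr rfl fun p _ => ?_
  have h1 : ∀ σ ∈ Finset.univ.filter fun σ : Perm (Fin n) => asc n σ = p,
      f (asc n σ) = f p := fun σ h => by rw [(mem_filter.mp h).2]
  rw [Finset.sum_congr rfl h1, Finset.sum_const, nsmul_eq_mul, eulerian_eq]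

/-! ### indicator combinatorics -/

def chi {n : ℕ} (a b : Fin n) (σ : Perm (Fin n)) : ℚ :=
  if (σ a : ℕ) < (σ b : ℕ) then 1 else 0

def ind (n : ℕ) (i : ℕ) (σ : Perm (Fin n)) : ℚ :=
  if h : i + 1 < n then chi ⟨i, by omega⟩ ⟨i+1, h⟩ σ else 0

lemma sum_mulRight {n : ℕ} (π : Perm (Fin n)) (f : Perm (Fin n) → ℚ) :
    ∑ σ : Perm (Fin n), f (σ * π) = ∑ σ : Perm (Fin n), f σ :=
  Fintype.sum_equiv (Equiv.mulRight π) _ _ (fun _ => rfl)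

lemma chi_mul {n : ℕ} (a b : Fin n) (τ σ : Perm (Fin n)) :
    chi a b (σ * τ) = chi (τ a) (τ b) σ := rfl

lemma val_ne {n : ℕ} {a b : Fin n} (σ : Perm (Fin n)) (h : a ≠ b) :
    (σ a : ℕ) ≠ (σ b : ℕ) := by
  intro hc
  exact h (σ.injective (Fin.ext hc))

notation "K" n => ((Fintype.card (Perm (Fin n)) : ℚ))

lemma sum_chi {n : ℕ} (a b : Fin n) (hab : a ≠ b) :
    ∑ σ : Perm (Fin n), chi a b σ = (K n) / 2 := by
  have h1 : ∑ σ : Perm (Fin n), chi b a σ = ∑ σ : Perm (Fin n), chi a b σ := by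
    rw [← sum_mulRight (Equiv.swap a b) (chi b a)]
    refine Finset.sum_congr rfl fun σ _ => ?_
    rw [chi_mul, Equiv.swap_apply_left, Equiv.swap_apply_right]
  have h2 : ∑ σ : Perm (Fin n), (chi a b σ + chi b a σ) = (K n) := by
    rw [Finset.sum_congr rfl (fun σ _ => ?_), Finset.sum_const, Finset.card_univ,
      nsmul_eq_mul, mul_one]
    have := val_ne σ hab
    unfold chi
    split_ifs <;> try norm_num
    all_goals omega
  rw [Finset.sum_add_distrib, h1] at h2
  linarith

lemma sum_chi_far {n : ℕ} (a b c d : Fin n) (hab : a ≠ b) (hcd : c ≠ d)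
    (hac : a ≠ c) (had : a ≠ d) (hbc : b ≠ c) (hbd : b ≠ d) :
    ∑ σ : Perm (Fin n), chi a b σ * chi c d σ = (K n) / 4 := by
  have h1 : ∑ σ : Perm (Fin n), chi a b σ * chi d c σ
      = ∑ σ : Perm (Fin n), chi a b σ * chi c d σ := by
    rw [← sum_mulRight (Equiv.swap c d) (fun σ => chi a b σ * chi d c σ)]
    refine Finset.sum_congr rfl fun σ _ => ?_
    simp only [chi_mul, Equiv.swap_apply_left, Equiv.swap_apply_right,
      Equiv.swap_apply_of_ne_of_ne hac had, Equiv.swap_apply_of_ne_of_ne hbc hbd]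
  have h2 : ∑ σ : Perm (Fin n), (chi a b σ * chi c d σ + chi a b σ * chi d c σ)
      = ∑ σ : Perm (Fin n), chi a b σ := by
    refine Finset.sum_congr rfl fun σ _ => ?_
    have := val_ne σ hcd
    unfold chi
    split_ifs <;> try norm_num
    all_goals omega
  rw [Finset.sum_add_distrib, h1] at h2
  rw [sum_chi a b hab] at h2
  linarith

lemma sum_chi_chain {n : ℕ} (a b c : Fin n) (hab : a ≠ b) (hac : a ≠ c) (hbc : b ≠ c) :
    ∑ σ : Perm (Fin n), chi a b σ * chi b c σ = (K n) / 6 := by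
  -- U = ∑ χab χac
  have hU1 : ∑ σ : Perm (Fin n), chi b a σ * chi b c σ
      = ∑ σ : Perm (Fin n), chi a b σ * chi a c σ := by
    rw [← sum_mulRight (Equiv.swap a b) (fun σ => chi a b σ * chi a c σ)]
    refine Finset.sum_congr rfl fun σ _ => ?_
    simp only [chi_mul, Equiv.swap_apply_left, Equiv.swap_apply_right,
      Equiv.swap_apply_of_ne_of_ne (Ne.symm hac) (Ne.symm hbc)]
  have hU2 : ∑ σ : Perm (Fin n), chi c b σ * chi c a σ
      = ∑ σ : Perm (Fin n), chi a b σ * chi a c σ := by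
    rw [← sum_mulRight (Equiv.swap a c) (fun σ => chi a b σ * chi a c σ)]
    refine Finset.sum_congr rfl fun σ _ => ?_
    simp only [chi_mul, Equiv.swap_apply_left, Equiv.swap_apply_right,
      Equiv.swap_apply_of_ne_of_ne (Ne.symm hab) hbc]
  have hU3 : ∑ σ : Perm (Fin n),
      (chi a b σ * chi a c σ + chi b a σ * chi b c σ + chi c b σ * chi c a σ)
      = (K n) := by
    rw [Finset.sum_congr rfl (fun σ _ => ?_), Finset.sum_const, Finset.card_univ,
      nsmul_eq_mul, mul_one]
    have h1 := val_ne σ hab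
    have h2 := val_ne σ hac
    have h3 := val_ne σ hbc
    unfold chi
    split_ifs <;> try norm_num
    all_goals omega
  have hU : ∑ σ : Perm (Fin n), chi a b σ * chi a c σ = (K n) / 3 := by
    rw [Finset.sum_add_distrib, Finset.sum_add_distrib, hU1, hU2] at hU3
    linarith
  -- T
  have hT1 : ∑ σ : Perm (Fin n), chi a c σ * chi c b σ
      = ∑ σ : Perm (Fin n), chi a b σ * chi b c σ := by
    rw [← sum_mulRight (Equiv.swap b c) (fun σ => chi a c σ * chi c b σ)]
    refine Finset.sum_congr rfl fun σ _ => ?_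
    simp only [chi_mul, Equiv.swap_apply_left, Equiv.swap_apply_right,
      Equiv.swap_apply_of_ne_of_ne hab hac]
  have hT2 : ∑ σ : Perm (Fin n), (chi a b σ * chi b c σ + chi a c σ * chi c b σ)
      = ∑ σ : Perm (Fin n), chi a b σ * chi a c σ := by
    refine Finset.sum_congr rfl fun σ _ => ?_
    have h1 := val_ne σ hab
    have h2 := val_ne σ hac
    have h3 := val_ne σ hbc
    unfold chi
    split_ifs <;> try norm_num
    all_goals omega
  rw [Finset.sum_add_distrib, hT1, hU] at hT2
  linarith

variable {n : ℕ}

lemma ind_eq_zero {i : ℕ} (h : ¬ i + 1 < n) (σ : Perm (Fin n)) : ind n i σ = 0 :=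
  dif_neg h

lemma asc_cast (σ : Perm (Fin n)) :
    (asc n σ : ℚ) = ∑ i ∈ range n, ind n i σ := by
  unfold asc
  have hrep : (Finset.univ.filter fun i : Fin n =>
        ∃ j : Fin n, (j : ℕ) = (i : ℕ) + 1 ∧ σ i < σ j)
      = (Finset.univ.filter fun i : Fin n =>
        ∃ j : Fin n, (j : ℕ) = (i : ℕ) + 1 ∧ (σ i : ℕ) < (σ j : ℕ)) := by
    apply Finset.filter_congr
    intro i _
    simp only [Fin.lt_def]
  rw [hrep, Finset.card_filter, Nat.cast_sum,
    ← Fin.sum_univ_eq_sum_range (fun i => ind n i σ)]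
  refine Finset.sum_congr rfl fun i _ => ?_
  by_cases h : (i : ℕ) + 1 < n
  · have hiff : (∃ j : Fin n, (j:ℕ) = (i:ℕ) + 1 ∧ (σ i : ℕ) < (σ j : ℕ))
        ↔ (σ i : ℕ) < (σ ⟨(i:ℕ)+1, h⟩ : ℕ) := by
      constructor
      · rintro ⟨j, hj, hs⟩
        have hje : j = ⟨(i:ℕ)+1, h⟩ := Fin.ext hj
        rwa [hje] at hs
      · intro hs; exact ⟨_, rfl, hs⟩
    rw [ind, dif_pos h]
    unfold chi
    rw [Fin.eta]
    simp only [hiff]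
    split_ifs <;> norm_num
  · rw [ind_eq_zero h]
    have hno : ¬ ∃ j : Fin n, (j:ℕ) = (i:ℕ) + 1 ∧ (σ i : ℕ) < (σ j : ℕ) := by
      rintro ⟨j, hj, -⟩
      have := j.isLt; omega
    rw [if_neg hno]; simp

lemma sum_ind {i : ℕ} (h : i + 1 < n) :
    ∑ σ : Perm (Fin n), ind n i σ = (K n) / 2 := by
  have he : ∀ σ : Perm (Fin n), ind n i σ = chi ⟨i, by omega⟩ ⟨i+1, h⟩ σ :=
    fun σ => dif_pos h
  simp only [he]
  exact sum_chi _ _ (by simp [Fin.ext_iff])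

lemma ind_mul_self (i : ℕ) (σ : Perm (Fin n)) :
    ind n i σ * ind n i σ = ind n i σ := by
  unfold ind chi
  split_ifs <;> norm_num

lemma sum_ind_mul_adj {i : ℕ} (h : i + 2 < n) :
    ∑ σ : Perm (Fin n), ind n i σ * ind n (i+1) σ = (K n) / 6 := by
  have h1 : i + 1 < n := by omega
  have he : ∀ σ : Perm (Fin n), ind n i σ * ind n (i+1) σ
      = chi ⟨i, by omega⟩ ⟨i+1, h1⟩ σ * chi ⟨i+1, h1⟩ ⟨i+2, h⟩ σ := by
    intro σ
    rw [ind, dif_pos h1, ind, dif_pos h]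
  simp only [he]
  exact sum_chi_chain (n := n) ⟨i, by omega⟩ ⟨i+1, by omega⟩ ⟨i+2, by omega⟩
    (by simp [Fin.ext_iff]) (by simp [Fin.ext_iff]) (by simp [Fin.ext_iff])

lemma sum_ind_mul_far {i j : ℕ} (hi : i + 1 < n) (hj : j + 1 < n)
    (h1 : i ≠ j) (h2 : i ≠ j + 1) (h3 : j ≠ i + 1) :
    ∑ σ : Perm (Fin n), ind n i σ * ind n j σ = (K n) / 4 := by
  have he : ∀ σ : Perm (Fin n), ind n i σ * ind n j σ
      = chi ⟨i, by omega⟩ ⟨i+1, hi⟩ σ * chi ⟨j, by omega⟩ ⟨j+1, hj⟩ σ := by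
    intro σ
    rw [ind, dif_pos hi, ind, dif_pos hj]
  simp only [he]
  exact sum_chi_far (n := n) ⟨i, by omega⟩ ⟨i+1, hi⟩ ⟨j, by omega⟩ ⟨j+1, hj⟩
    (by simp [Fin.ext_iff]) (by simp [Fin.ext_iff]) (by simp [Fin.ext_iff]; omega)
    (by simp [Fin.ext_iff]; omega) (by simp [Fin.ext_iff]; omega)
    (by simp [Fin.ext_iff]; omega)

lemma key (k : ℕ) :
    ∑ σ : Perm (Fin (k+2)), ∑ τ : Perm (Fin (k+2)),
        ((asc (k+2) σ : ℚ) - (asc (k+2) τ : ℚ))^2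
      = (Fintype.card (Perm (Fin (k+2))) : ℚ)^2 * (((k:ℚ)+3)/6) := by
  have hS1 : ∑ σ : Perm (Fin (k+2)), (asc (k+2) σ : ℚ)
      = ((k:ℚ)+1) * ((Fintype.card (Perm (Fin (k+2))) : ℚ)/2) := by
    simp only [asc_cast]
    rw [Finset.sum_comm]
    rw [Finset.sum_range_succ]
    have hlast : ∑ σ : Perm (Fin (k+2)), ind (k+2) (k+1) σ = 0 :=
      Finset.sum_eq_zero fun σ _ => ind_eq_zero (by omega) σ
    rw [hlast, add_zero]
    rw [Finset.sum_congr rfl fun i hi =>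
      sum_ind (by simp only [mem_range] at hi; omega)]
    rw [Finset.sum_const, Finset.card_range, nsmul_eq_mul]
    push_cast; ring
  have hS2 : ∑ σ : Perm (Fin (k+2)), (asc (k+2) σ : ℚ)^2
      = ((k:ℚ)+1)^2 * ((Fintype.card (Perm (Fin (k+2))) : ℚ)/4)
        + ((k:ℚ)+1) * ((Fintype.card (Perm (Fin (k+2))) : ℚ)/4)
        + (k:ℚ) * ((Fintype.card (Perm (Fin (k+2))) : ℚ)/6
            - (Fintype.card (Perm (Fin (k+2))) : ℚ)/4)
        + (k:ℚ) * ((Fintype.card (Perm (Fin (k+2))) : ℚ)/6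
            - (Fintype.card (Perm (Fin (k+2))) : ℚ)/4) := by
    have hexp : ∀ σ : Perm (Fin (k+2)), (asc (k+2) σ : ℚ)^2
        = ∑ i ∈ range (k+2), ∑ j ∈ range (k+2), ind (k+2) i σ * ind (k+2) j σ := by
      intro σ
      rw [asc_cast, sq, Finset.sum_mul_sum]
    simp only [hexp]
    rw [Finset.sum_comm]
    rw [Finset.sum_congr rfl fun i _ => Finset.sum_comm]
    have hrow : ∀ i, ∑ j ∈ range (k+2), ∑ σ : Perm (Fin (k+2)), ind (k+2) i σ * ind (k+2) j σ
        = ∑ j ∈ range (k+1), ∑ σ : Perm (Fin (k+2)), ind (k+2) i σ * ind (k+2) j σ := by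
      intro i
      rw [show k+2 = (k+1)+1 from rfl, Finset.sum_range_succ]
      have hz : ∑ σ : Perm (Fin (k+2)), ind (k+2) i σ * ind (k+2) (k+1) σ = 0 :=
        Finset.sum_eq_zero fun σ _ => by
          rw [show ind (k+2) (k+1) σ = 0 from ind_eq_zero (by omega) σ, mul_zero]
      rw [hz, add_zero]
    simp only [hrow]
    rw [show k+2 = (k+1)+1 from rfl, Finset.sum_range_succ]
    have hlastrow : ∑ j ∈ range (k+1),
        ∑ σ : Perm (Fin (k+2)), ind (k+2) (k+1) σ * ind (k+2) j σ = 0 :=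
      Finset.sum_eq_zero fun j _ => Finset.sum_eq_zero fun σ _ => by
        rw [show ind (k+2) (k+1) σ = 0 from ind_eq_zero (by omega) σ, zero_mul]
    rw [hlastrow, add_zero]
    have hc : ∀ i ∈ range (k+1), ∀ j ∈ range (k+1),
        ∑ σ : Perm (Fin (k+2)), ind (k+2) i σ * ind (k+2) j σ
        = (Fintype.card (Perm (Fin (k+2))) : ℚ)/4
          + (if i = j then (Fintype.card (Perm (Fin (k+2))) : ℚ)/4 else 0)
          + (if j = i+1 then (Fintype.card (Perm (Fin (k+2))) : ℚ)/6
              - (Fintype.card (Perm (Fin (k+2))) : ℚ)/4 else 0)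
          + (if i = j+1 then (Fintype.card (Perm (Fin (k+2))) : ℚ)/6
              - (Fintype.card (Perm (Fin (k+2))) : ℚ)/4 else 0) := by
      intro i hi j hj
      simp only [mem_range] at hi hj
      by_cases hij : i = j
      · subst hij
        rw [if_pos rfl, if_neg (by omega : ¬ i = i + 1), add_zero, add_zero]
        have hms : ∀ σ : Perm (Fin (k+2)), ind (k+2) i σ * ind (k+2) i σ = ind (k+2) i σ :=
          fun σ => ind_mul_self i σ
        rw [Finset.sum_congr rfl fun σ _ => hms σ, sum_ind (by omega)]
        ring
      · by_cases hj1 : j = i + 1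
        · subst hj1
          rw [if_neg hij, if_pos rfl, if_neg (by omega : ¬ i = (i+1)+1), add_zero]
          rw [sum_ind_mul_adj (by omega)]
          ring
        · by_cases hi1 : i = j + 1
          · subst hi1
            rw [if_neg hij, if_neg (by omega : ¬ j = (j+1)+1), if_pos rfl]
            rw [Finset.sum_congr rfl fun σ _ =>
                mul_comm (ind (k+2) (j+1) σ) (ind (k+2) j σ),
              sum_ind_mul_adj (by omega)]
            ring
          · rw [if_neg hij, if_neg hj1, if_neg hi1]
            rw [sum_ind_mul_far (by omega) (by omega) hij hi1 hj1]
            ring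
    rw [Finset.sum_congr rfl fun i hi => Finset.sum_congr rfl fun j hj => hc i hi j hj]
    simp only [Finset.sum_add_distrib]
    have e1 : ∑ _i ∈ range (k+1), ∑ _j ∈ range (k+1),
        (Fintype.card (Perm (Fin (k+2))) : ℚ)/4
        = ((k:ℚ)+1)^2 * ((Fintype.card (Perm (Fin (k+2))) : ℚ)/4) := by
      simp only [Finset.sum_const, Finset.card_range, nsmul_eq_mul]
      push_cast; ring
    have e2 : ∑ i ∈ range (k+1), ∑ j ∈ range (k+1),
        (if i = j then (Fintype.card (Perm (Fin (k+2))) : ℚ)/4 else 0)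
        = ((k:ℚ)+1) * ((Fintype.card (Perm (Fin (k+2))) : ℚ)/4) := by
      have h1 : ∀ i ∈ range (k+1), ∑ j ∈ range (k+1),
          (if i = j then (Fintype.card (Perm (Fin (k+2))) : ℚ)/4 else 0)
          = (Fintype.card (Perm (Fin (k+2))) : ℚ)/4 := by
        intro i hi
        rw [Finset.sum_ite_eq, if_pos hi]
      rw [Finset.sum_congr rfl h1, Finset.sum_const, Finset.card_range, nsmul_eq_mul]
      push_cast; ring
    have e3 : ∑ i ∈ range (k+1), ∑ j ∈ range (k+1),
        (if j = i+1 then (Fintype.card (Perm (Fin (k+2))) : ℚ)/6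
          - (Fintype.card (Perm (Fin (k+2))) : ℚ)/4 else 0)
        = (k:ℚ) * ((Fintype.card (Perm (Fin (k+2))) : ℚ)/6
            - (Fintype.card (Perm (Fin (k+2))) : ℚ)/4) := by
      have h1 : ∀ i : ℕ, ∑ j ∈ range (k+1),
          (if j = i+1 then (Fintype.card (Perm (Fin (k+2))) : ℚ)/6
            - (Fintype.card (Perm (Fin (k+2))) : ℚ)/4 else 0)
          = if i+1 ∈ range (k+1) then (Fintype.card (Perm (Fin (k+2))) : ℚ)/6
              - (Fintype.card (Perm (Fin (k+2))) : ℚ)/4 else 0 := fun i =>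
        Finset.sum_ite_eq' (range (k+1)) (i+1) _
      simp only [h1]
      rw [Finset.sum_range_succ, if_neg (by simp), add_zero]
      have h2 : ∀ i ∈ range k,
          (if i+1 ∈ range (k+1) then (Fintype.card (Perm (Fin (k+2))) : ℚ)/6
            - (Fintype.card (Perm (Fin (k+2))) : ℚ)/4 else 0)
          = (Fintype.card (Perm (Fin (k+2))) : ℚ)/6
            - (Fintype.card (Perm (Fin (k+2))) : ℚ)/4 := by
        intro i hi
        rw [if_pos (by simp only [mem_range] at *; omega)]
      rw [Finset.sum_congr rfl h2, Finset.sum_const, Finset.card_range, nsmul_eq_mul]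
    have e4 : ∑ i ∈ range (k+1), ∑ j ∈ range (k+1),
        (if i = j+1 then (Fintype.card (Perm (Fin (k+2))) : ℚ)/6
          - (Fintype.card (Perm (Fin (k+2))) : ℚ)/4 else 0)
        = (k:ℚ) * ((Fintype.card (Perm (Fin (k+2))) : ℚ)/6
            - (Fintype.card (Perm (Fin (k+2))) : ℚ)/4) := by
      rw [Finset.sum_comm]
      have h1 : ∀ j : ℕ, ∑ i ∈ range (k+1),
          (if i = j+1 then (Fintype.card (Perm (Fin (k+2))) : ℚ)/6
            - (Fintype.card (Perm (Fin (k+2))) : ℚ)/4 else 0)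
          = if j+1 ∈ range (k+1) then (Fintype.card (Perm (Fin (k+2))) : ℚ)/6
              - (Fintype.card (Perm (Fin (k+2))) : ℚ)/4 else 0 := fun j =>
        Finset.sum_ite_eq' (range (k+1)) (j+1) _
      simp only [h1]
      rw [Finset.sum_range_succ, if_neg (by simp), add_zero]
      have h2 : ∀ i ∈ range k,
          (if i+1 ∈ range (k+1) then (Fintype.card (Perm (Fin (k+2))) : ℚ)/6
            - (Fintype.card (Perm (Fin (k+2))) : ℚ)/4 else 0)
          = (Fintype.card (Perm (Fin (k+2))) : ℚ)/6
            - (Fintype.card (Perm (Fin (k+2))) : ℚ)/4 := by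
        intro i hi
        rw [if_pos (by simp only [mem_range] at *; omega)]
      rw [Finset.sum_congr rfl h2, Finset.sum_const, Finset.card_range, nsmul_eq_mul]
    rw [e1, e2, e3, e4]
  have hexpand : ∑ σ : Perm (Fin (k+2)), ∑ τ : Perm (Fin (k+2)),
      ((asc (k+2) σ : ℚ) - (asc (k+2) τ : ℚ))^2
      = 2 * (Fintype.card (Perm (Fin (k+2))) : ℚ)
          * (∑ σ : Perm (Fin (k+2)), (asc (k+2) σ : ℚ)^2)
        - 2 * (∑ σ : Perm (Fin (k+2)), (asc (k+2) σ : ℚ))^2 := by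
    have h1 : ∀ σ : Perm (Fin (k+2)), ∑ τ : Perm (Fin (k+2)),
        ((asc (k+2) σ : ℚ) - (asc (k+2) τ : ℚ))^2
        = (Fintype.card (Perm (Fin (k+2))) : ℚ) * (asc (k+2) σ : ℚ)^2
          - 2 * ((asc (k+2) σ : ℚ) * (∑ τ : Perm (Fin (k+2)), (asc (k+2) τ : ℚ)))
          + (∑ τ : Perm (Fin (k+2)), (asc (k+2) τ : ℚ)^2) := by
      intro σ
      have hpt : ∀ τ : Perm (Fin (k+2)), ((asc (k+2) σ : ℚ) - (asc (k+2) τ : ℚ))^2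
          = (asc (k+2) σ : ℚ)^2
            - 2 * ((asc (k+2) σ : ℚ) * (asc (k+2) τ : ℚ)) + (asc (k+2) τ : ℚ)^2 :=
        fun τ => by ring
      rw [Finset.sum_congr rfl fun τ _ => hpt τ]
      rw [Finset.sum_add_distrib, Finset.sum_sub_distrib, Finset.sum_const,
        Finset.card_univ, nsmul_eq_mul]
      have hB : ∑ τ : Perm (Fin (k+2)), 2 * ((asc (k+2) σ : ℚ) * (asc (k+2) τ : ℚ))
          = 2 * ((asc (k+2) σ : ℚ) * (∑ τ : Perm (Fin (k+2)), (asc (k+2) τ : ℚ))) := by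
        rw [← Finset.mul_sum, ← Finset.mul_sum]
      rw [hB]
    rw [Finset.sum_congr rfl fun σ _ => h1 σ]
    rw [Finset.sum_add_distrib, Finset.sum_sub_distrib, Finset.sum_const,
      Finset.card_univ, nsmul_eq_mul]
    have hA : ∑ σ : Perm (Fin (k+2)),
        (Fintype.card (Perm (Fin (k+2))) : ℚ) * (asc (k+2) σ : ℚ)^2
        = (Fintype.card (Perm (Fin (k+2))) : ℚ)
            * ∑ σ : Perm (Fin (k+2)), (asc (k+2) σ : ℚ)^2 := by
      rw [← Finset.mul_sum]
    have hB : ∑ σ : Perm (Fin (k+2)),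
        2 * ((asc (k+2) σ : ℚ) * (∑ τ : Perm (Fin (k+2)), (asc (k+2) τ : ℚ)))
        = 2 * ((∑ σ : Perm (Fin (k+2)), (asc (k+2) σ : ℚ))
            * (∑ τ : Perm (Fin (k+2)), (asc (k+2) τ : ℚ))) := by
      rw [← Finset.mul_sum, ← Finset.sum_mul]
    rw [hA, hB]
    ring
  rw [hexpand, hS1, hS2]
  ring

end EulerAux

open EulerAux

/-- The second moment of the normalized autocorrelation of Eulerian numbers is
`(n+1)/6`:  `∑ᵢ i² (∑ₚ A(n,p) A(n,p-i)) / (∑ₚ A(n,p))² = (n+1)/6`.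
(The sums over `i` and `p` run over all integers; all terms outside
`[-n, n]` vanish, so finite sums over `[-n, n]` suffice.) -/
theorem eulerian_autocorrelation_second_moment (n : ℕ) (hn : 2 ≤ n) :
    (∑ i ∈ Finset.Icc (-(n : ℤ)) (n : ℤ), (i : ℚ) ^ 2 *
        ∑ p ∈ Finset.Icc (-(n : ℤ)) (n : ℤ),
          (eulerianZ n p : ℚ) * (eulerianZ n (p - i) : ℚ)) /
      (∑ p ∈ Finset.range n, (eulerian n p : ℚ)) ^ 2 = ((n : ℚ) + 1) / 6 := by
  obtain ⟨k, rfl⟩ : ∃ k, n = k + 2 := ⟨n - 2, by omega⟩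
  have h1 : 1 ≤ k + 2 := by omega
  -- denominator
  have hD : ∑ p ∈ Finset.range (k+2), (eulerian (k+2) p : ℚ)
      = (Fintype.card (Perm (Fin (k+2))) : ℚ) := by
    have h := sum_eulerian_mul (n := k+2) h1 (fun _ => (1:ℚ))
    simpa using h
  -- inner sum conversion for fixed i
  have hInner : ∀ i : ℤ,
      ∑ p ∈ Finset.Icc (-((k+2:ℕ) : ℤ)) ((k+2:ℕ) : ℤ),
        (eulerianZ (k+2) p : ℚ) * (eulerianZ (k+2) (p - i) : ℚ)
      = ∑ p ∈ Finset.range (k+2),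
        (eulerian (k+2) p : ℚ) * (eulerianZ (k+2) ((p:ℤ) - i) : ℚ) := by
    intro i
    exact sum_eZ_prune h1 _
      (fun q hq => by simp only [Finset.mem_Icc]; omega)
      (fun q => (eulerianZ (k+2) (q - i) : ℚ))
  -- the p-indexed inner reindexing
  have hRow : ∀ p : ℕ, p < k + 2 →
      ∑ i ∈ Finset.Icc (-((k+2:ℕ) : ℤ)) ((k+2:ℕ) : ℤ),
        (i : ℚ)^2 * ((eulerian (k+2) p : ℚ) * (eulerianZ (k+2) ((p:ℤ) - i) : ℚ))
      = ∑ q ∈ Finset.range (k+2),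
        ((p:ℚ) - (q:ℚ))^2 * ((eulerian (k+2) p : ℚ) * (eulerian (k+2) q : ℚ)) := by
    intro p hp
    have step1 :
        ∑ i ∈ Finset.Icc (-((k+2:ℕ) : ℤ)) ((k+2:ℕ) : ℤ),
          (i : ℚ)^2 * ((eulerian (k+2) p : ℚ) * (eulerianZ (k+2) ((p:ℤ) - i) : ℚ))
        = ∑ q ∈ Finset.Icc ((p:ℤ) - ((k+2:ℕ):ℤ)) ((p:ℤ) + ((k+2:ℕ):ℤ)),
          (eulerianZ (k+2) q : ℚ) * ((((p:ℤ) - q : ℤ) : ℚ)^2 * (eulerian (k+2) p : ℚ)) := by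
      refine Finset.sum_nbij' (i := fun i => (p:ℤ) - i) (j := fun q => (p:ℤ) - q)
        ?_ ?_ ?_ ?_ ?_
      · intro a ha; simp only [Finset.mem_Icc] at *; omega
      · intro b hb; simp only [Finset.mem_Icc] at *; omega
      · intro a _; omega
      · intro b _; omega
      · intro a _
        have h2 : (p:ℤ) - ((p:ℤ) - a) = a := by ring
        rw [h2]
        ring
    rw [step1]
    rw [sum_eZ_prune h1 _ (fun q hq => by simp only [Finset.mem_Icc]; omega)
      (fun q => ((((p:ℤ) - q : ℤ) : ℚ)^2 * (eulerian (k+2) p : ℚ)))]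
    refine Finset.sum_congr rfl fun q _ => ?_
    push_cast
    ring
  -- numerator to permutation sums
  have hNum :
      (∑ i ∈ Finset.Icc (-((k+2:ℕ) : ℤ)) ((k+2:ℕ) : ℤ), (i : ℚ) ^ 2 *
        ∑ p ∈ Finset.Icc (-((k+2:ℕ) : ℤ)) ((k+2:ℕ) : ℤ),
          (eulerianZ (k+2) p : ℚ) * (eulerianZ (k+2) (p - i) : ℚ))
      = ∑ σ : Perm (Fin (k+2)), ∑ τ : Perm (Fin (k+2)),
          ((asc (k+2) σ : ℚ) - (asc (k+2) τ : ℚ))^2 := by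
    calc
      ∑ i ∈ Finset.Icc (-((k+2:ℕ) : ℤ)) ((k+2:ℕ) : ℤ), (i : ℚ) ^ 2 *
          ∑ p ∈ Finset.Icc (-((k+2:ℕ) : ℤ)) ((k+2:ℕ) : ℤ),
            (eulerianZ (k+2) p : ℚ) * (eulerianZ (k+2) (p - i) : ℚ)
        = ∑ i ∈ Finset.Icc (-((k+2:ℕ) : ℤ)) ((k+2:ℕ) : ℤ), ∑ p ∈ Finset.range (k+2),
            (i : ℚ)^2 * ((eulerian (k+2) p : ℚ) * (eulerianZ (k+2) ((p:ℤ) - i) : ℚ)) := by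
          refine Finset.sum_congr rfl fun i _ => ?_
          rw [hInner i, Finset.mul_sum]
      _ = ∑ p ∈ Finset.range (k+2), ∑ i ∈ Finset.Icc (-((k+2:ℕ) : ℤ)) ((k+2:ℕ) : ℤ),
            (i : ℚ)^2 * ((eulerian (k+2) p : ℚ) * (eulerianZ (k+2) ((p:ℤ) - i) : ℚ)) :=
          Finset.sum_comm
      _ = ∑ p ∈ Finset.range (k+2), ∑ q ∈ Finset.range (k+2),
            ((p:ℚ) - (q:ℚ))^2 * ((eulerian (k+2) p : ℚ) * (eulerian (k+2) q : ℚ)) := by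
          refine Finset.sum_congr rfl fun p hp => ?_
          exact hRow p (Finset.mem_range.mp hp)
      _ = ∑ p ∈ Finset.range (k+2), (eulerian (k+2) p : ℚ) *
            (∑ q ∈ Finset.range (k+2), ((p:ℚ) - (q:ℚ))^2 * (eulerian (k+2) q : ℚ)) := by
          refine Finset.sum_congr rfl fun p _ => ?_
          rw [Finset.mul_sum]
          exact Finset.sum_congr rfl fun q _ => by ring
      _ = ∑ σ : Perm (Fin (k+2)),
            ∑ q ∈ Finset.range (k+2), ((asc (k+2) σ : ℚ) - (q:ℚ))^2 * (eulerian (k+2) q : ℚ) :=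
          sum_eulerian_mul h1 _
      _ = ∑ σ : Perm (Fin (k+2)), ∑ τ : Perm (Fin (k+2)),
            ((asc (k+2) σ : ℚ) - (asc (k+2) τ : ℚ))^2 := by
          refine Finset.sum_congr rfl fun σ _ => ?_
          have hswap : ∑ q ∈ Finset.range (k+2),
              ((asc (k+2) σ : ℚ) - (q:ℚ))^2 * (eulerian (k+2) q : ℚ)
              = ∑ q ∈ Finset.range (k+2),
                (eulerian (k+2) q : ℚ) * ((asc (k+2) σ : ℚ) - (q:ℚ))^2 :=
            Finset.sum_congr rfl fun q _ => by ring
          rw [hswap, sum_eulerian_mul h1 (fun q => ((asc (k+2) σ : ℚ) - (q:ℚ))^2)]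
  rw [hNum, key k, hD]
  have hK0 : (Fintype.card (Perm (Fin (k+2))) : ℚ) ≠ 0 :=
    Nat.cast_ne_zero.mpr Fintype.card_ne_zero
  field_simp
  push_cast
  ring
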